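/- For |q|<1 and ζ with |ζ|<1, ζ ≠ 1 (and denominators nonzero): ₂φ₁(q²,0;−q;q²;ζ) = 1 + ζ/((1−ζ)(1+q)) · R(ζ,−q;q²), where R(α,β;Q) = Σ_{n≥0} (αβ)^n Q^{n²}/((αQ;Q)_n (βQ;Q)_n) and ₂φ₁(a,0;b;q;z) = Σ_{n≥0} (a;q)_n/((b;q)_n (q;q)_n) z^n. -/

import Mathlib

open Complex

/-- The q-Pochhammer symbol `(a;q)_n = ∏_{j=0}^{n-1} (1 - a q^j)`. -/
noncomputable def qPoch (a q : ℂ) (n : ℕ) : ℂ := ∏ j ∈ Finset.range n, (1 - a * q ^ j)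

/-- The universal mock theta function
`R(α,β;Q) = Σ_{n≥0} (αβ)^n Q^{n²}/((αQ;Q)_n (βQ;Q)_n)`. -/
noncomputable def univR (α β Q : ℂ) : ℂ :=
  ∑' n : ℕ, (α * β) ^ n * Q ^ (n ^ 2) / (qPoch (α * Q) Q n * qPoch (β * Q) Q n)

lemma qPoch_zero (a q : ℂ) : qPoch a q 0 = 1 := Finset.prod_range_zero _

lemma qPoch_succ (a q : ℂ) (n : ℕ) :
    qPoch a q (n + 1) = qPoch a q n * (1 - a * q ^ n) := Finset.prod_range_succ _ _

lemma qPoch_succ' (a q : ℂ) (n : ℕ) :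
    qPoch a q (n + 1) = (1 - a) * qPoch (a * q) q n := by
  rw [qPoch, Finset.prod_range_succ']
  simp only [pow_zero, mul_one, qPoch]
  rw [mul_comm]
  congr 1
  exact Finset.prod_congr rfl fun j _ => by ring_nf

lemma one_sub_ne_zero_of_norm_lt_one {x : ℂ} (h : ‖x‖ < 1) : (1 : ℂ) - x ≠ 0 := by
  intro h0
  rw [sub_eq_zero] at h0
  rw [← h0] at h
  simp at h

lemma norm_one_sub_ge (x : ℂ) : 1 - ‖x‖ ≤ ‖1 - x‖ := by
  calc 1 - ‖x‖ = ‖(1:ℂ)‖ - ‖x‖ := by simp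
    _ ≤ ‖1 - x‖ := norm_sub_norm_le _ _

lemma qPoch_ne_zero {a q : ℂ} (ha : ‖a‖ < 1) (hq : ‖q‖ ≤ 1) (n : ℕ) : qPoch a q n ≠ 0 := by
  refine Finset.prod_ne_zero_iff.mpr fun j _ => one_sub_ne_zero_of_norm_lt_one ?_
  calc ‖a * q ^ j‖ = ‖a‖ * ‖q‖ ^ j := by rw [norm_mul, norm_pow]
    _ ≤ ‖a‖ * 1 := by
        have := pow_le_one₀ (norm_nonneg q) hq (n := j)
        nlinarith [norm_nonneg a]
    _ < 1 := by simpa using ha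

/-- Weierstrass product inequality. -/
lemma one_sub_sum_le_prod_one_sub (s : Finset ℕ) (f : ℕ → ℝ) (h0 : ∀ i ∈ s, 0 ≤ f i)
    (h1 : ∀ i ∈ s, f i ≤ 1) : 1 - ∑ i ∈ s, f i ≤ ∏ i ∈ s, (1 - f i) := by
  induction s using Finset.cons_induction with
  | empty => simp
  | cons a s ha ih =>
    rw [Finset.prod_cons, Finset.sum_cons]
    have hfa0 : 0 ≤ f a := h0 a (Finset.mem_cons_self a s)
    have hfa1 : f a ≤ 1 := h1 a (Finset.mem_cons_self a s)
    have ih' := ih (fun i hi => h0 i (Finset.mem_cons_of_mem hi))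
      (fun i hi => h1 i (Finset.mem_cons_of_mem hi))
    have hsum : 0 ≤ ∑ i ∈ s, f i := Finset.sum_nonneg fun i hi => h0 i (Finset.mem_cons_of_mem hi)
    nlinarith [ih']

lemma exists_qPoch_lb (s t : ℝ) (hs0 : 0 ≤ s) (hs1 : s < 1) (ht0 : 0 ≤ t) (ht1 : t < 1) :
    ∃ c : ℝ, 0 < c ∧ ∀ (x q : ℂ) (n : ℕ), ‖x‖ ≤ s → ‖q‖ ≤ t → c ≤ ‖qPoch x q n‖ := by
  -- choose J with s * t ^ J ≤ (1 - t) / 2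
  obtain ⟨J, hJ⟩ : ∃ J : ℕ, s * t ^ J ≤ (1 - t) / 2 := by
    have htend : Filter.Tendsto (fun n : ℕ => s * t ^ n) Filter.atTop (nhds 0) := by
      simpa using (tendsto_pow_atTop_nhds_zero_of_lt_one ht0 ht1).const_mul s
    have hpos : (0:ℝ) < (1 - t) / 2 := by linarith
    obtain ⟨J, hJ⟩ := (htend.eventually (eventually_le_nhds hpos)).exists
    exact ⟨J, hJ⟩
  have h1s : (0:ℝ) < 1 - s := by linarith
  refine ⟨(1 - s) ^ J * (1 / 2), by positivity, fun x q n hx hq => ?_⟩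
  -- first: reduce to real product
  have key : ∀ m : ℕ, ∏ j ∈ Finset.range m, (1 - s * t ^ j) ≤ ‖qPoch x q m‖ := by
    intro m
    rw [qPoch, norm_prod]
    refine Finset.prod_le_prod (fun j _ => ?_) (fun j _ => ?_)
    · have : s * t ^ j ≤ s * 1 := by
        have := pow_le_one₀ ht0 ht1.le (n := j)
        nlinarith
      linarith
    · refine le_trans ?_ (norm_one_sub_ge _)
      have : ‖x * q ^ j‖ ≤ s * t ^ j := by
        rw [norm_mul, norm_pow]
        exact mul_le_mul hx (pow_le_pow_left₀ (norm_nonneg q) hq j) (by positivity) hs0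
      linarith
  refine le_trans ?_ (key n)
  -- now bound the real product
  have hfac_nonneg : ∀ j : ℕ, 0 ≤ 1 - s * t ^ j := by
    intro j
    have : s * t ^ j ≤ s * 1 := by
      have := pow_le_one₀ ht0 ht1.le (n := j); nlinarith
    linarith
  have hfac_lb : ∀ j : ℕ, 1 - s ≤ 1 - s * t ^ j := by
    intro j
    have : s * t ^ j ≤ s * 1 := by
      have := pow_le_one₀ ht0 ht1.le (n := j); nlinarith
    linarith
  have hone : ∀ m : ℕ, (1 - s) ^ m = ∏ j ∈ Finset.range m, (1 - s) := by
    intro m; rw [Finset.prod_const, Finset.card_range]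
  have h1t : (0:ℝ) < 1 - t := by linarith
  by_cases hnJ : n ≤ J
  · calc (1 - s) ^ J * (1 / 2) ≤ (1 - s) ^ J := by
          nlinarith [pow_nonneg (by linarith : (0:ℝ) ≤ 1 - s) J]
      _ ≤ (1 - s) ^ n := pow_le_pow_of_le_one (by linarith) (by linarith) hnJ
      _ = ∏ j ∈ Finset.range n, (1 - s) := hone n
      _ ≤ ∏ j ∈ Finset.range n, (1 - s * t ^ j) :=
          Finset.prod_le_prod (fun j _ => by linarith) (fun j _ => hfac_lb j)
  · push_neg at hnJ
    rw [← Finset.prod_range_mul_prod_Ico _ (le_of_lt hnJ)]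
    have h1 : (1 - s) ^ J ≤ ∏ j ∈ Finset.range J, (1 - s * t ^ j) := by
      rw [hone J]
      exact Finset.prod_le_prod (fun j _ => by linarith) (fun j _ => hfac_lb j)
    have h2 : (1:ℝ) / 2 ≤ ∏ j ∈ Finset.Ico J n, (1 - s * t ^ j) := by
      have hsum : ∑ j ∈ Finset.Ico J n, s * t ^ j ≤ 1 / 2 := by
        calc ∑ j ∈ Finset.Ico J n, s * t ^ j
            = ∑ i ∈ Finset.range (n - J), s * t ^ (J + i) := by
              rw [Finset.sum_Ico_eq_sum_range]
          _ = s * t ^ J * ∑ i ∈ Finset.range (n - J), t ^ i := by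
              rw [Finset.mul_sum]; exact Finset.sum_congr rfl fun i _ => by ring
          _ ≤ s * t ^ J * (1 - t)⁻¹ := by
              refine mul_le_mul_of_nonneg_left ?_ (by positivity)
              refine (Summable.sum_le_tsum (Finset.range (n - J)) (fun i _ => by positivity) ?_).trans_eq
                (tsum_geometric_of_lt_one ht0 ht1)
              exact summable_geometric_of_lt_one ht0 ht1
          _ ≤ (1 - t) / 2 * (1 - t)⁻¹ := mul_le_mul_of_nonneg_right hJ (by positivity)
          _ = 1 / 2 := by
              rw [div_mul_eq_mul_div, mul_inv_cancel₀ (by linarith : (1:ℝ) - t ≠ 0)]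
      have W := one_sub_sum_le_prod_one_sub (Finset.Ico J n) (fun j => s * t ^ j)
        (fun i _ => by positivity)
        (fun i _ => by
          have : s * t ^ i ≤ s * 1 := by
            have := pow_le_one₀ ht0 ht1.le (n := i); nlinarith
          show s * t ^ i ≤ 1; linarith)
      have : (1:ℝ)/2 ≤ 1 - ∑ j ∈ Finset.Ico J n, s * t ^ j := by linarith
      exact this.trans W
    calc (1 - s) ^ J * (1 / 2)
        ≤ (∏ j ∈ Finset.range J, (1 - s * t ^ j)) * ∏ j ∈ Finset.Ico J n, (1 - s * t ^ j) := by
          refine mul_le_mul h1 h2 (by norm_num) ?_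
          exact Finset.prod_nonneg fun j _ => hfac_nonneg j
      _ = _ := rfl


noncomputable def myF (b τ Q : ℂ) : ℂ := ∑' n : ℕ, τ ^ n / qPoch b Q n

lemma summable_myF_term {b τ Q : ℂ} {c : ℝ} (hc : 0 < c)
    (hlb : ∀ n, c ≤ ‖qPoch b Q n‖) (hτ : ‖τ‖ < 1) :
    Summable (fun n : ℕ => τ ^ n / qPoch b Q n) := by
  refine Summable.of_norm_bounded (g := fun n => ‖τ‖ ^ n / c)
    ((summable_geometric_of_lt_one (norm_nonneg τ) hτ).div_const c) (fun n => ?_)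
  rw [norm_div, norm_pow]
  exact div_le_div₀ (by positivity) le_rfl hc (hlb n)

set_option maxHeartbeats 800000 in
lemma norm_myF_le {b τ Q : ℂ} {c s : ℝ} (hc : 0 < c)
    (hlb : ∀ n, c ≤ ‖qPoch b Q n‖) (hτs : ‖τ‖ ≤ s) (hs : s < 1) :
    ‖myF b τ Q‖ ≤ (1 - s)⁻¹ / c := by
  have hs0 : (0:ℝ) ≤ s := le_trans (norm_nonneg τ) hτs
  have hτ : ‖τ‖ < 1 := lt_of_le_of_lt hτs hs
  have hsum := summable_myF_term hc hlb hτ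
  calc ‖myF b τ Q‖ ≤ ∑' n : ℕ, ‖τ ^ n / qPoch b Q n‖ := norm_tsum_le_tsum_norm hsum.norm
    _ ≤ ∑' n : ℕ, s ^ n / c := by
        refine Summable.tsum_le_tsum (fun n => ?_) hsum.norm
          ((summable_geometric_of_lt_one hs0 hs).div_const c)
        rw [norm_div, norm_pow]
        exact div_le_div₀ (by positivity) (pow_le_pow_left₀ (norm_nonneg τ) hτs n) hc (hlb n)
    _ = (1 - s)⁻¹ / c := by
        rw [tsum_div_const, tsum_geometric_of_lt_one hs0 hs]

set_option maxHeartbeats 1600000 in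
lemma funceq {b τ Q : ℂ} (hb : ‖b‖ < 1) (hτ : ‖τ‖ < 1) (hQ : ‖Q‖ < 1) :
    (1 - τ) * myF b τ Q = 1 + b * τ / (1 - b) * myF (b * Q) (τ * Q) Q := by
  obtain ⟨c, hc, hlb⟩ := exists_qPoch_lb (max ‖b‖ ‖τ‖) ‖Q‖
    (le_trans (norm_nonneg b) (le_max_left _ _)) (max_lt hb hτ) (norm_nonneg Q) hQ
  have h1 : Summable (fun n : ℕ => τ ^ n / qPoch b Q n) :=
    summable_myF_term hc (fun n => hlb b Q n (le_max_left _ _) le_rfl) hτ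
  have hbQ : ‖b * Q‖ ≤ max ‖b‖ ‖τ‖ := by
    rw [norm_mul]
    calc ‖b‖ * ‖Q‖ ≤ ‖b‖ * 1 := by
          have := hQ.le; nlinarith [norm_nonneg b, norm_nonneg Q]
      _ = ‖b‖ := mul_one _
      _ ≤ _ := le_max_left _ _
  have hτQ : ‖τ * Q‖ < 1 := by
    rw [norm_mul]
    nlinarith [norm_nonneg τ, norm_nonneg Q]
  have h2 : Summable (fun n : ℕ => (τ * Q) ^ n / qPoch (b * Q) Q n) :=
    summable_myF_term hc (fun n => hlb (b * Q) Q n hbQ le_rfl) hτQ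
  have hne : ∀ n, qPoch b Q n ≠ 0 := qPoch_ne_zero hb hQ.le
  have hb1 : (1 : ℂ) - b ≠ 0 := one_sub_ne_zero_of_norm_lt_one hb
  have hbQn : ∀ n : ℕ, (1 : ℂ) - b * Q ^ n ≠ 0 := by
    intro n
    refine one_sub_ne_zero_of_norm_lt_one ?_
    rw [norm_mul, norm_pow]
    have := pow_le_one₀ (norm_nonneg Q) hQ.le (n := n)
    nlinarith [norm_nonneg b, pow_nonneg (norm_nonneg Q) n]
  have key : ∀ n : ℕ, τ ^ (n + 1) / qPoch b Q (n + 1) - τ * (τ ^ n / qPoch b Q n)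
      = b * τ / (1 - b) * ((τ * Q) ^ n / qPoch (b * Q) Q n) := by
    intro n
    have e1 := qPoch_succ b Q n
    have e2 := qPoch_succ' b Q n
    have hne' : qPoch (b * Q) Q n ≠ 0 := by
      intro h0
      exact hne (n + 1) (by rw [e2, h0, mul_zero])
    have hrel : qPoch b Q n * (1 - b * Q ^ n) = (1 - b) * qPoch (b * Q) Q n :=
      e1.symm.trans e2
    have h0 : τ * (τ ^ n / qPoch b Q n) = τ ^ (n + 1) / qPoch b Q n := by
      rw [mul_div_assoc', ← pow_succ']
    rw [h0, e1]
    have step1 : τ ^ (n + 1) / (qPoch b Q n * (1 - b * Q ^ n)) - τ ^ (n + 1) / qPoch b Q n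
        = τ ^ (n + 1) * (b * Q ^ n) / (qPoch b Q n * (1 - b * Q ^ n)) := by
      field_simp [hne n, hbQn n]
      ring
    rw [step1, div_mul_div_comm, ← hrel]
    congr 1
    rw [mul_pow]
    ring
  have hshift : Summable (fun n : ℕ => τ ^ (n + 1) / qPoch b Q (n + 1)) :=
    (summable_nat_add_iff 1).mpr h1
  have hmul : Summable (fun n : ℕ => τ * (τ ^ n / qPoch b Q n)) := h1.mul_left τ
  have hA : myF b τ Q = 1 + ∑' n : ℕ, τ ^ (n + 1) / qPoch b Q (n + 1) := by
    rw [myF, Summable.tsum_eq_zero_add h1]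
    simp [qPoch_zero]
  have hB : τ * myF b τ Q = ∑' n : ℕ, τ * (τ ^ n / qPoch b Q n) := by
    rw [myF, ← tsum_mul_left]
  calc (1 - τ) * myF b τ Q = myF b τ Q - τ * myF b τ Q := by ring
    _ = (1 + ∑' n : ℕ, τ ^ (n + 1) / qPoch b Q (n + 1))
        - ∑' n : ℕ, τ * (τ ^ n / qPoch b Q n) := by
        rw [hB, hA]
    _ = 1 + ∑' n : ℕ, (τ ^ (n + 1) / qPoch b Q (n + 1) - τ * (τ ^ n / qPoch b Q n)) := by
        rw [Summable.tsum_sub hshift hmul]; ring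
    _ = 1 + b * τ / (1 - b) * myF (b * Q) (τ * Q) Q := by
        rw [myF, ← tsum_mul_left]
        congr 1
        exact tsum_congr key


noncomputable def myB (b τ Q : ℂ) (n : ℕ) : ℂ :=
  b ^ n * τ ^ n * Q ^ (n * (n - 1)) / (qPoch b Q n * qPoch τ Q (n + 1))

noncomputable def myP (b τ Q : ℂ) (n : ℕ) : ℂ :=
  b ^ n * τ ^ n * Q ^ (n * (n - 1)) / (qPoch b Q n * qPoch τ Q n)

lemma norm_mul_pow_le {b Q : ℂ} (hb : ‖b‖ < 1) (hQ : ‖Q‖ ≤ 1) (M : ℕ) : ‖b * Q ^ M‖ ≤ ‖b‖ := by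
  rw [norm_mul, norm_pow]
  have h := pow_le_one₀ (norm_nonneg Q) hQ (n := M)
  nlinarith [norm_nonneg b, pow_nonneg (norm_nonneg Q) M]

lemma iter {b τ Q : ℂ} (hb : ‖b‖ < 1) (hτ : ‖τ‖ < 1) (hQ : ‖Q‖ < 1) (M : ℕ) :
    myF b τ Q = (∑ n ∈ Finset.range M, myB b τ Q n)
      + myP b τ Q M * myF (b * Q ^ M) (τ * Q ^ M) Q := by
  induction M with
  | zero =>
    simp [myP, qPoch_zero]
  | succ M ih =>
    have hbM : ‖b * Q ^ M‖ < 1 := lt_of_le_of_lt (norm_mul_pow_le hb hQ.le M) hb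
    have hτM : ‖τ * Q ^ M‖ < 1 := lt_of_le_of_lt (norm_mul_pow_le hτ hQ.le M) hτ
    have hfe := funceq hbM hτM hQ
    have hτMne : (1 : ℂ) - τ * Q ^ M ≠ 0 := one_sub_ne_zero_of_norm_lt_one hτM
    have hbMne : (1 : ℂ) - b * Q ^ M ≠ 0 := one_sub_ne_zero_of_norm_lt_one hbM
    have hF : myF (b * Q ^ M) (τ * Q ^ M) Q
        = (1 - τ * Q ^ M)⁻¹ * (1 + (b * Q ^ M) * (τ * Q ^ M) / (1 - b * Q ^ M)
            * myF ((b * Q ^ M) * Q) ((τ * Q ^ M) * Q) Q) := by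
      rw [← hfe, inv_mul_cancel_left₀ hτMne]
    have harg1 : (b * Q ^ M) * Q = b * Q ^ (M + 1) := by ring
    have harg2 : (τ * Q ^ M) * Q = τ * Q ^ (M + 1) := by ring
    rw [ih, hF, harg1, harg2, Finset.sum_range_succ]
    have hexp : (M + 1) * ((M + 1) - 1) = M * (M - 1) + 2 * M := by
      cases M with
      | zero => rfl
      | succ k => simp [Nat.succ_sub_one]; ring
    have hPb : qPoch b Q M ≠ 0 := qPoch_ne_zero hb hQ.le M
    have hPτ : qPoch τ Q M ≠ 0 := qPoch_ne_zero hτ hQ.le M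
    -- identities for B and P
    have hBM : myP b τ Q M * (1 - τ * Q ^ M)⁻¹ = myB b τ Q M := by
      rw [myP, myB, qPoch_succ τ Q M]
      field_simp
    have hPM1 : myP b τ Q M * ((1 - τ * Q ^ M)⁻¹ * ((b * Q ^ M) * (τ * Q ^ M) / (1 - b * Q ^ M)))
        = myP b τ Q (M + 1) := by
      rw [myP, myP, qPoch_succ τ Q M, qPoch_succ b Q M, hexp]
      field_simp
      ring
    calc (∑ n ∈ Finset.range M, myB b τ Q n) + myP b τ Q M * ((1 - τ * Q ^ M)⁻¹ *
            (1 + b * Q ^ M * (τ * Q ^ M) / (1 - b * Q ^ M) * myF (b * Q ^ (M+1)) (τ * Q ^ (M+1)) Q))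
        = (∑ n ∈ Finset.range M, myB b τ Q n) + (myP b τ Q M * (1 - τ * Q ^ M)⁻¹
            + myP b τ Q M * ((1 - τ * Q ^ M)⁻¹ * (b * Q ^ M * (τ * Q ^ M) / (1 - b * Q ^ M)))
              * myF (b * Q ^ (M+1)) (τ * Q ^ (M+1)) Q) := by ring
      _ = _ := by rw [hBM, hPM1]; ring

lemma expansion {b τ Q : ℂ} (hb : ‖b‖ < 1) (hτ : ‖τ‖ < 1) (hQ : ‖Q‖ < 1) :
    myF b τ Q = ∑' n : ℕ, myB b τ Q n := by
  obtain ⟨c, hc, hlb⟩ := exists_qPoch_lb (max ‖b‖ ‖τ‖) ‖Q‖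
    (le_trans (norm_nonneg b) (le_max_left _ _)) (max_lt hb hτ) (norm_nonneg Q) hQ
  set r : ℝ := max ‖b‖ ‖τ‖ with hr
  have hr0 : 0 ≤ r := le_trans (norm_nonneg b) (le_max_left _ _)
  have hr1 : r < 1 := max_lt hb hτ
  have hblb : ∀ n, c ≤ ‖qPoch b Q n‖ := fun n => hlb b Q n (le_max_left _ _) le_rfl
  have hτlb : ∀ n, c ≤ ‖qPoch τ Q n‖ := fun n => hlb τ Q n (le_max_right _ _) le_rfl
  have hQpow : ∀ k : ℕ, ‖Q ^ k‖ ≤ 1 := fun k => by rw [norm_pow]; exact pow_le_one₀ (norm_nonneg Q) hQ.le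
  -- bound on the generic numerator
  have hnum : ∀ n : ℕ, ‖b ^ n * τ ^ n * Q ^ (n * (n - 1))‖ ≤ (r * r) ^ n := by
    intro n
    rw [norm_mul, norm_mul, norm_pow, norm_pow, mul_pow]
    have h1 : ‖b‖ ^ n ≤ r ^ n := pow_le_pow_left₀ (norm_nonneg b) (le_max_left _ _) n
    have h2 : ‖τ‖ ^ n ≤ r ^ n := pow_le_pow_left₀ (norm_nonneg τ) (le_max_right _ _) n
    have h3 : ‖Q ^ (n * (n - 1))‖ ≤ 1 := hQpow _
    have h4 : (0:ℝ) ≤ ‖b‖ ^ n := pow_nonneg (norm_nonneg b) n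
    have h5 : (0:ℝ) ≤ ‖τ‖ ^ n := pow_nonneg (norm_nonneg τ) n
    have h6 : (0:ℝ) ≤ ‖Q ^ (n * (n - 1))‖ := norm_nonneg _
    calc ‖b‖ ^ n * ‖τ‖ ^ n * ‖Q ^ (n * (n - 1))‖
        ≤ r ^ n * r ^ n * 1 :=
          mul_le_mul (mul_le_mul h1 h2 h5 (pow_nonneg hr0 n)) h3 h6 (by positivity)
      _ = r ^ n * r ^ n := mul_one _
  have hBsum : Summable (fun n => myB b τ Q n) := by
    refine Summable.of_norm_bounded (g := fun n => (r * r) ^ n / (c * c)) ?_ (fun n => ?_)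
    · exact (summable_geometric_of_lt_one (by positivity) (by nlinarith)).div_const _
    · rw [myB, norm_div]
      refine div_le_div₀ (by positivity) (hnum n) (by positivity) ?_
      rw [norm_mul]
      calc c * c ≤ ‖qPoch b Q n‖ * ‖qPoch τ Q (n + 1)‖ :=
            mul_le_mul (hblb n) (hτlb (n + 1)) hc.le (norm_nonneg _)
        _ = _ := rfl
  -- partial sums tend to myF
  have hK : ∀ M : ℕ, ‖myP b τ Q M * myF (b * Q ^ M) (τ * Q ^ M) Q‖
      ≤ (r * r) ^ M / (c * c) * ((1 - r)⁻¹ / c) := by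
    intro M
    rw [norm_mul]
    have hP : ‖myP b τ Q M‖ ≤ (r * r) ^ M / (c * c) := by
      rw [myP, norm_div]
      refine div_le_div₀ (by positivity) (hnum M) (by positivity) ?_
      rw [norm_mul]
      exact mul_le_mul (hblb M) (hτlb M) hc.le (norm_nonneg _)
    have hFb : ‖myF (b * Q ^ M) (τ * Q ^ M) Q‖ ≤ (1 - r)⁻¹ / c := by
      refine norm_myF_le hc (fun n => hlb _ Q n ?_ le_rfl) ?_ hr1
      · exact le_trans (norm_mul_pow_le hb hQ.le M) (le_max_left _ _)
      · exact le_trans (norm_mul_pow_le hτ hQ.le M) (le_max_right _ _)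
    exact mul_le_mul hP hFb (norm_nonneg _) (by positivity)
  have htend0 : Filter.Tendsto (fun M : ℕ => myP b τ Q M * myF (b * Q ^ M) (τ * Q ^ M) Q)
      Filter.atTop (nhds 0) := by
    refine squeeze_zero_norm hK ?_
    have : Filter.Tendsto (fun M : ℕ => (r * r) ^ M) Filter.atTop (nhds 0) :=
      tendsto_pow_atTop_nhds_zero_of_lt_one (by positivity) (by nlinarith)
    have := (this.div_const (c * c)).mul_const ((1 - r)⁻¹ / c)
    simpa using this
  have hparts : Filter.Tendsto (fun M : ℕ => ∑ n ∈ Finset.range M, myB b τ Q n)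
      Filter.atTop (nhds (myF b τ Q)) := by
    have heq : (fun M : ℕ => ∑ n ∈ Finset.range M, myB b τ Q n)
        = fun M => myF b τ Q - myP b τ Q M * myF (b * Q ^ M) (τ * Q ^ M) Q := by
      funext M
      have := iter hb hτ hQ M
      linear_combination -this
    rw [heq]
    simpa using (tendsto_const_nhds (x := myF b τ Q)).sub htend0
  exact tendsto_nhds_unique hparts hBsum.hasSum.tendsto_sum_nat


/-- `₂φ₁(q²,0;−q;q²;ζ) = 1 + ζ/((1−ζ)(1+q)) · R(ζ,−q;q²)`. -/
theorem twoPhiOne_eq_R_neg_q (q ζ : ℂ) (hq0 : 0 < ‖q‖) (hq1 : ‖q‖ < 1)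
    (hζ : ‖ζ‖ < 1) (hζ1 : ζ ≠ 1) (hζq : ∀ m : ℕ, ζ * q ^ (2 * m) ≠ 1) :
    ∑' n : ℕ, qPoch (q ^ 2) (q ^ 2) n /
        (qPoch (-q) (q ^ 2) n * qPoch (q ^ 2) (q ^ 2) n) * ζ ^ n
      = 1 + ζ / ((1 - ζ) * (1 + q)) * univR ζ (-q) (q ^ 2) := by
  have hq1' : ‖q ^ 2‖ < 1 := by
    rw [norm_pow]
    calc ‖q‖ ^ 2 ≤ ‖q‖ * 1 := by nlinarith
      _ < 1 := by nlinarith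
  have hnq : ‖-q‖ < 1 := by rw [norm_neg]; exact hq1
  have hb' : ‖(-q) * q ^ 2‖ < 1 := by
    rw [norm_mul, norm_neg, norm_pow]
    nlinarith [norm_nonneg q]
  have hζQ : ‖ζ * q ^ 2‖ < 1 := by
    rw [norm_mul, norm_pow]
    nlinarith [norm_nonneg ζ, norm_nonneg q, sq_nonneg (‖q‖)]
  have h1q : (1 : ℂ) + q ≠ 0 := by
    have := one_sub_ne_zero_of_norm_lt_one hnq
    rwa [sub_neg_eq_add] at this
  have h1ζ : (1 : ℂ) - ζ ≠ 0 := one_sub_ne_zero_of_norm_lt_one hζ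
  -- Step 1 : LHS = myF (-q) ζ (q^2)
  have step1 : (∑' n : ℕ, qPoch (q ^ 2) (q ^ 2) n /
        (qPoch (-q) (q ^ 2) n * qPoch (q ^ 2) (q ^ 2) n) * ζ ^ n) = myF (-q) ζ (q ^ 2) := by
    rw [myF]
    refine tsum_congr fun n => ?_
    have hA := qPoch_ne_zero hq1' hq1'.le n
    have hB := qPoch_ne_zero hnq hq1'.le n
    field_simp
  -- Step 2 : myF (-q) ζ (q^2) = 1 + ζ/(1+q) * myF ((-q)*q^2) ζ (q^2)
  have step2 : myF (-q) ζ (q ^ 2) = 1 + ζ / (1 + q) * myF ((-q) * q ^ 2) ζ (q ^ 2) := by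
    obtain ⟨c, hc, hlb⟩ := exists_qPoch_lb ‖q‖ ‖q ^ 2‖ (norm_nonneg q) hq1
      (norm_nonneg _) hq1'
    have h1 : Summable (fun n : ℕ => ζ ^ n / qPoch (-q) (q ^ 2) n) :=
      summable_myF_term hc (fun n => hlb (-q) (q ^ 2) n (by rw [norm_neg]) le_rfl) hζ
    rw [myF, Summable.tsum_eq_zero_add h1]
    have hterm : ∀ n : ℕ, ζ ^ (n + 1) / qPoch (-q) (q ^ 2) (n + 1)
        = ζ / (1 + q) * (ζ ^ n / qPoch ((-q) * q ^ 2) (q ^ 2) n) := by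
      intro n
      rw [qPoch_succ' (-q) (q ^ 2) n, sub_neg_eq_add]
      have hC : qPoch ((-q) * q ^ 2) (q ^ 2) n ≠ 0 := qPoch_ne_zero hb' hq1'.le n
      field_simp
      ring
    rw [tsum_congr hterm, tsum_mul_left, myF]
    simp [qPoch_zero]
  -- Step 3 + 4
  have step3 : myF ((-q) * q ^ 2) ζ (q ^ 2) = (1 - ζ)⁻¹ * univR ζ (-q) (q ^ 2) := by
    rw [expansion hb' hζ hq1', univR, ← tsum_mul_left]
    refine tsum_congr fun n => ?_
    have hnn : n ^ 2 = n + n * (n - 1) := by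
      cases n with
      | zero => rfl
      | succ k => simp [Nat.succ_sub_one]; ring
    have hC : qPoch ((-q) * q ^ 2) (q ^ 2) n ≠ 0 := qPoch_ne_zero hb' hq1'.le n
    have hD : qPoch (ζ * q ^ 2) (q ^ 2) n ≠ 0 := qPoch_ne_zero hζQ hq1'.le n
    rw [myB, qPoch_succ' ζ (q ^ 2) n, hnn, pow_add]
    field_simp
    ring
  rw [step1, step2, step3]
  have : ζ / (1 + q) * ((1 - ζ)⁻¹ * univR ζ (-q) (q ^ 2))
      = ζ / ((1 - ζ) * (1 + q)) * univR ζ (-q) (q ^ 2) := by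
    field_simp
  rw [this]
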